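/- Let q be a nonzero complex number and define the following 7×7 complex matrices (E_ij denotes the matrix unit with 1 in row i, column j): Kα = diag(q, q⁻¹, q², 1, q⁻², q, q⁻¹), Kβ = diag(1, q³, q⁻³, 1, q³, q⁻³, 1), Eα = E₁₂+E₃₄+E₄₅+E₆₇, Fα = E₂₁+(q+q⁻¹)E₄₃+(q+q⁻¹)E₅₄+E₇₆, Eβ = E₂₃+E₅₆, Fβ = E₃₂+E₆₅. Then all of the following hold: KαKβ = KβKα; Kα·Eα·Kα⁻¹ = q²·Eα; Kα·Eβ·Kα⁻¹ = q⁻³·Eβ; Kβ·Eα·Kβ⁻¹ = q⁻³·Eα; Kβ·Eβ·Kβ⁻¹ = q⁶·Eβ; Kα·Fα·Kα⁻¹ = q⁻²·Fα; Kα·Fβ·Kα⁻¹ = q³·Fβ; Kβ·Fα·Kβ⁻¹ = q³·Fα; Kβ·Fβ·Kβ⁻¹ = q⁻⁶·Fβ; Eα·Fβ = Fβ·Eα; Eβ·Fα = Fα·Eβ; (q−q⁻¹)(EαFα − FαEα) = Kα − Kα⁻¹; (q³−q⁻³)(EβFβ − FβEβ) = Kβ − Kβ⁻¹; the q-Serre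 relations Eα⁴Eβ − [4]_q·Eα³EβEα + [3]_q(q²+q⁻²)·Eα²EβEα² − [4]_q·EαEβEα³ + EβEα⁴ = 0 and Eβ²Eα − (q³+q⁻³)·EβEαEβ + EαEβ² = 0 hold, and the same two q-Serre relations hold with (Eα,Eβ) replaced by (Fα,Fβ). (Hence this assignment defines a representation of the quantized universal enveloping algebra U_q(g₂) on ℂ⁷, the minimal representation.) -/

import Mathlib

/-!
The minimal 7-dimensional representation of the quantized universal enveloping
algebra `U_q(g₂)`: the images of the generators `q^{hα}, q^{hβ}, e_α, f_α, e_β, f_β`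
satisfy all the defining relations of `U_q(g₂)`.
-/

open Matrix

noncomputable section

namespace Stmt0

/-- Image of `q^{hα}`. -/
def Kα (q : ℂ) : Matrix (Fin 7) (Fin 7) ℂ :=
  diagonal ![q, q⁻¹, q ^ 2, 1, q⁻¹ ^ 2, q, q⁻¹]

/-- Image of `q^{hβ}`. -/
def Kβ (q : ℂ) : Matrix (Fin 7) (Fin 7) ℂ :=
  diagonal ![1, q ^ 3, q⁻¹ ^ 3, 1, q ^ 3, q⁻¹ ^ 3, 1]

/-- Image of `e_α`. -/
def Eα : Matrix (Fin 7) (Fin 7) ℂ :=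
  Matrix.single 0 1 1 + Matrix.single 2 3 1 + Matrix.single 3 4 1 + Matrix.single 5 6 1

/-- Image of `f_α`. -/
def Fα (q : ℂ) : Matrix (Fin 7) (Fin 7) ℂ :=
  Matrix.single 1 0 1 + Matrix.single 3 2 (q + q⁻¹) + Matrix.single 4 3 (q + q⁻¹) +
    Matrix.single 6 5 1

/-- Image of `e_β`. -/
def Eβ : Matrix (Fin 7) (Fin 7) ℂ :=
  Matrix.single 1 2 1 + Matrix.single 4 5 1

/-- Image of `f_β`. -/
def Fβ : Matrix (Fin 7) (Fin 7) ℂ :=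
  Matrix.single 2 1 1 + Matrix.single 5 4 1

lemma v5 {α : Type*} (x₀ x₁ x₂ x₃ x₄ x₅ x₆ : α) : ![x₀,x₁,x₂,x₃,x₄,x₅,x₆] 5 = x₅ := rfl
lemma v6 {α : Type*} (x₀ x₁ x₂ x₃ x₄ x₅ x₆ : α) : ![x₀,x₁,x₂,x₃,x₄,x₅,x₆] 6 = x₆ := rfl

lemma hKai (q : ℂ) (hq : q ≠ 0) : (Kα q)⁻¹ = diagonal ![q⁻¹, q, q⁻¹ ^ 2, 1, q ^ 2, q⁻¹, q] := by
  apply Matrix.inv_eq_right_inv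
  ext a b
  rcases eq_or_ne a b with rfl | h
  · rw [Kα]
    simp only [diagonal_mul_diagonal, diagonal_apply_eq, one_apply_eq]
    fin_cases a <;> simp [v5, v6] <;> field_simp
  · rw [Kα]
    simp [diagonal_mul_diagonal, diagonal_apply_ne _ h, one_apply_ne h]

lemma hKbi (q : ℂ) (hq : q ≠ 0) : (Kβ q)⁻¹ = diagonal ![1, q⁻¹ ^ 3, q ^ 3, 1, q⁻¹ ^ 3, q ^ 3, 1] := by
  apply Matrix.inv_eq_right_inv
  ext a b
  rcases eq_or_ne a b with rfl | h
  · rw [Kβ]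
    simp only [diagonal_mul_diagonal, diagonal_apply_eq, one_apply_eq]
    fin_cases a <;> simp [v5, v6] <;> field_simp
  · rw [Kβ]
    simp [diagonal_mul_diagonal, diagonal_apply_ne _ h, one_apply_ne h]

lemma relKK (q : ℂ) : Kα q * Kβ q = Kβ q * Kα q := by
  rw [Kα, Kβ, diagonal_mul_diagonal, diagonal_mul_diagonal]
  ext a b
  rcases eq_or_ne a b with rfl | h
  · simp only [diagonal_apply_eq]; ring
  · simp [diagonal_apply_ne _ h]

lemma conj1 (q : ℂ) (hq : q ≠ 0) : Kα q * Eα * (Kα q)⁻¹ = q ^ 2 • Eα := by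
  rw [hKai q hq]
  ext a b
  rw [Matrix.mul_diagonal, Kα, Matrix.diagonal_mul, Matrix.smul_apply]
  fin_cases a <;> fin_cases b <;>
    (try simp [Eα, v5, v6]) <;> (try field_simp) <;> (try ring) <;> (try tauto)

lemma conj2 (q : ℂ) (hq : q ≠ 0) : Kα q * Eβ * (Kα q)⁻¹ = q⁻¹ ^ 3 • Eβ := by
  rw [hKai q hq]
  ext a b
  rw [Matrix.mul_diagonal, Kα, Matrix.diagonal_mul, Matrix.smul_apply]
  fin_cases a <;> fin_cases b <;>
    (try simp [Eβ, v5, v6]) <;> (try field_simp) <;> (try ring) <;> (try tauto)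

lemma conj3 (q : ℂ) (hq : q ≠ 0) : Kβ q * Eα * (Kβ q)⁻¹ = q⁻¹ ^ 3 • Eα := by
  rw [hKbi q hq]
  ext a b
  rw [Matrix.mul_diagonal, Kβ, Matrix.diagonal_mul, Matrix.smul_apply]
  fin_cases a <;> fin_cases b <;>
    (try simp [Eα, v5, v6]) <;> (try field_simp) <;> (try ring) <;> (try tauto)

lemma conj4 (q : ℂ) (hq : q ≠ 0) : Kβ q * Eβ * (Kβ q)⁻¹ = q ^ 6 • Eβ := by
  rw [hKbi q hq]
  ext a b
  rw [Matrix.mul_diagonal, Kβ, Matrix.diagonal_mul, Matrix.smul_apply]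
  fin_cases a <;> fin_cases b <;>
    (try simp [Eβ, v5, v6]) <;> (try field_simp) <;> (try ring) <;> (try tauto)

lemma conj5 (q : ℂ) (hq : q ≠ 0) : Kα q * Fα q * (Kα q)⁻¹ = q⁻¹ ^ 2 • Fα q := by
  rw [hKai q hq]
  ext a b
  rw [Matrix.mul_diagonal, Kα, Matrix.diagonal_mul, Matrix.smul_apply]
  fin_cases a <;> fin_cases b <;>
    (try simp [Fα, v5, v6]) <;> (try field_simp) <;> (try ring) <;> (try tauto)

lemma conj6 (q : ℂ) (hq : q ≠ 0) : Kα q * Fβ * (Kα q)⁻¹ = q ^ 3 • Fβ := by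
  rw [hKai q hq]
  ext a b
  rw [Matrix.mul_diagonal, Kα, Matrix.diagonal_mul, Matrix.smul_apply]
  fin_cases a <;> fin_cases b <;>
    (try simp [Fβ, v5, v6]) <;> (try field_simp) <;> (try ring) <;> (try tauto)

lemma conj7 (q : ℂ) (hq : q ≠ 0) : Kβ q * Fα q * (Kβ q)⁻¹ = q ^ 3 • Fα q := by
  rw [hKbi q hq]
  ext a b
  rw [Matrix.mul_diagonal, Kβ, Matrix.diagonal_mul, Matrix.smul_apply]
  fin_cases a <;> fin_cases b <;>
    (try simp [Fα, v5, v6]) <;> (try field_simp) <;> (try ring) <;> (try tauto)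

lemma conj8 (q : ℂ) (hq : q ≠ 0) : Kβ q * Fβ * (Kβ q)⁻¹ = q⁻¹ ^ 6 • Fβ := by
  rw [hKbi q hq]
  ext a b
  rw [Matrix.mul_diagonal, Kβ, Matrix.diagonal_mul, Matrix.smul_apply]
  fin_cases a <;> fin_cases b <;>
    (try simp [Fβ, v5, v6]) <;> (try field_simp) <;> (try ring) <;> (try tauto)

lemma rel10 : Eα * Fβ = Fβ * Eα := by
  simp [Eα, Fβ, mul_add, add_mul]

lemma rel11 (q : ℂ) : Eβ * Fα q = Fα q * Eβ := by
  simp [Eβ, Fα, mul_add, add_mul]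

lemma hEF (q : ℂ) : Eα * Fα q = Matrix.single 0 0 1 + Matrix.single 2 2 (q + q⁻¹)
    + Matrix.single 3 3 (q + q⁻¹) + Matrix.single 5 5 1 := by
  simp [Eα, Fα, mul_add, add_mul]

lemma hFE (q : ℂ) : Fα q * Eα = Matrix.single 1 1 1 + Matrix.single 3 3 (q + q⁻¹)
    + Matrix.single 4 4 (q + q⁻¹) + Matrix.single 6 6 1 := by
  simp [Eα, Fα, mul_add, add_mul]

lemma rel12 (q : ℂ) (hq : q ≠ 0) :
    (q - q⁻¹) • (Eα * Fα q - Fα q * Eα) = Kα q - (Kα q)⁻¹ := by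
  rw [hKai q hq, hEF, hFE, Kα]
  ext a b
  rw [Matrix.smul_apply, Matrix.sub_apply, Matrix.sub_apply]
  fin_cases a <;> fin_cases b <;>
    (try simp [v5, v6]) <;> (try field_simp) <;> (try ring) <;> (try tauto)

lemma hEbFb : Eβ * Fβ = Matrix.single 1 1 1 + Matrix.single 4 4 1 := by
  simp [Eβ, Fβ, mul_add, add_mul]

lemma hFbEb : Fβ * Eβ = Matrix.single 2 2 1 + Matrix.single 5 5 1 := by
  simp [Eβ, Fβ, mul_add, add_mul]

lemma rel13 (q : ℂ) (hq : q ≠ 0) :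
    (q ^ 3 - q⁻¹ ^ 3) • (Eβ * Fβ - Fβ * Eβ) = Kβ q - (Kβ q)⁻¹ := by
  rw [hKbi q hq, hEbFb, hFbEb, Kβ]
  ext a b
  rw [Matrix.smul_apply, Matrix.sub_apply, Matrix.sub_apply]
  fin_cases a <;> fin_cases b <;>
    (try simp [v5, v6]) <;> (try field_simp) <;> (try ring) <;> (try tauto)

lemma hEa2 : Eα ^ 2 = Matrix.single 2 4 1 := by
  rw [pow_two]; simp [Eα, mul_add, add_mul]

lemma hEa3 : Eα ^ 3 = 0 := by
  rw [pow_succ, hEa2]; simp [Eα, mul_add]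

lemma hEa4 : Eα ^ 4 = 0 := by
  rw [pow_succ, hEa3, zero_mul]

lemma serre1 (q : ℂ) :
    Eα ^ 4 * Eβ - (q ^ 3 + q + q⁻¹ + q⁻¹ ^ 3) • (Eα ^ 3 * Eβ * Eα)
      + ((q ^ 2 + 1 + q⁻¹ ^ 2) * (q ^ 2 + q⁻¹ ^ 2)) • (Eα ^ 2 * Eβ * Eα ^ 2)
      - (q ^ 3 + q + q⁻¹ + q⁻¹ ^ 3) • (Eα * Eβ * Eα ^ 3) + Eβ * Eα ^ 4 = 0 := by
  have h : Eα ^ 2 * Eβ * Eα ^ 2 = 0 := by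
    rw [hEa2]; simp [Eβ, mul_add, add_mul]
  rw [hEa3, hEa4, h]
  simp

lemma serre2 (q : ℂ) :
    Eβ ^ 2 * Eα - (q ^ 3 + q⁻¹ ^ 3) • (Eβ * Eα * Eβ) + Eα * Eβ ^ 2 = 0 := by
  have h2 : Eβ ^ 2 = 0 := by rw [pow_two]; simp [Eβ, mul_add, add_mul]
  have h3 : Eβ * Eα * Eβ = 0 := by simp [Eα, Eβ, mul_add, add_mul]
  rw [h2, h3]
  simp

lemma hFa2 (q : ℂ) : Fα q ^ 2 = Matrix.single 4 2 ((q + q⁻¹) * (q + q⁻¹)) := by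
  rw [pow_two]; simp [Fα, mul_add, add_mul]

lemma hFa3 (q : ℂ) : Fα q ^ 3 = 0 := by
  rw [pow_succ, hFa2]; simp [Fα, mul_add]

lemma hFa4 (q : ℂ) : Fα q ^ 4 = 0 := by
  rw [pow_succ, hFa3, zero_mul]

lemma serre3 (q : ℂ) :
    Fα q ^ 4 * Fβ - (q ^ 3 + q + q⁻¹ + q⁻¹ ^ 3) • (Fα q ^ 3 * Fβ * Fα q)
      + ((q ^ 2 + 1 + q⁻¹ ^ 2) * (q ^ 2 + q⁻¹ ^ 2)) • (Fα q ^ 2 * Fβ * Fα q ^ 2)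
      - (q ^ 3 + q + q⁻¹ + q⁻¹ ^ 3) • (Fα q * Fβ * Fα q ^ 3) + Fβ * Fα q ^ 4 = 0 := by
  have h : Fα q ^ 2 * Fβ * Fα q ^ 2 = 0 := by
    rw [hFa2]; simp [Fβ, mul_add, add_mul]
  rw [hFa3, hFa4, h]
  simp

lemma serre4 (q : ℂ) :
    Fβ ^ 2 * Fα q - (q ^ 3 + q⁻¹ ^ 3) • (Fβ * Fα q * Fβ) + Fα q * Fβ ^ 2 = 0 := by
  have h2 : Fβ ^ 2 = 0 := by rw [pow_two]; simp [Fβ, mul_add, add_mul]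
  have h3 : Fβ * Fα q * Fβ = 0 := by simp [Fα, Fβ, mul_add, add_mul]
  rw [h2, h3]
  simp

theorem minimal_representation (q : ℂ) (hq : q ≠ 0) :
    Kα q * Kβ q = Kβ q * Kα q ∧
    Kα q * Eα * (Kα q)⁻¹ = q ^ 2 • Eα ∧
    Kα q * Eβ * (Kα q)⁻¹ = q⁻¹ ^ 3 • Eβ ∧
    Kβ q * Eα * (Kβ q)⁻¹ = q⁻¹ ^ 3 • Eα ∧
    Kβ q * Eβ * (Kβ q)⁻¹ = q ^ 6 • Eβ ∧
    Kα q * Fα q * (Kα q)⁻¹ = q⁻¹ ^ 2 • Fα q ∧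
    Kα q * Fβ * (Kα q)⁻¹ = q ^ 3 • Fβ ∧
    Kβ q * Fα q * (Kβ q)⁻¹ = q ^ 3 • Fα q ∧
    Kβ q * Fβ * (Kβ q)⁻¹ = q⁻¹ ^ 6 • Fβ ∧
    Eα * Fβ = Fβ * Eα ∧
    Eβ * Fα q = Fα q * Eβ ∧
    (q - q⁻¹) • (Eα * Fα q - Fα q * Eα) = Kα q - (Kα q)⁻¹ ∧
    (q ^ 3 - q⁻¹ ^ 3) • (Eβ * Fβ - Fβ * Eβ) = Kβ q - (Kβ q)⁻¹ ∧
    Eα ^ 4 * Eβ - (q ^ 3 + q + q⁻¹ + q⁻¹ ^ 3) • (Eα ^ 3 * Eβ * Eα)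
      + ((q ^ 2 + 1 + q⁻¹ ^ 2) * (q ^ 2 + q⁻¹ ^ 2)) • (Eα ^ 2 * Eβ * Eα ^ 2)
      - (q ^ 3 + q + q⁻¹ + q⁻¹ ^ 3) • (Eα * Eβ * Eα ^ 3) + Eβ * Eα ^ 4 = 0 ∧
    Eβ ^ 2 * Eα - (q ^ 3 + q⁻¹ ^ 3) • (Eβ * Eα * Eβ) + Eα * Eβ ^ 2 = 0 ∧
    Fα q ^ 4 * Fβ - (q ^ 3 + q + q⁻¹ + q⁻¹ ^ 3) • (Fα q ^ 3 * Fβ * Fα q)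
      + ((q ^ 2 + 1 + q⁻¹ ^ 2) * (q ^ 2 + q⁻¹ ^ 2)) • (Fα q ^ 2 * Fβ * Fα q ^ 2)
      - (q ^ 3 + q + q⁻¹ + q⁻¹ ^ 3) • (Fα q * Fβ * Fα q ^ 3) + Fβ * Fα q ^ 4 = 0 ∧
    Fβ ^ 2 * Fα q - (q ^ 3 + q⁻¹ ^ 3) • (Fβ * Fα q * Fβ) + Fα q * Fβ ^ 2 = 0 := by
  exact ⟨relKK q, conj1 q hq, conj2 q hq, conj3 q hq, conj4 q hq, conj5 q hq, conj6 q hq,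
    conj7 q hq, conj8 q hq, rel10, rel11 q, rel12 q hq, rel13 q hq, serre1 q, serre2 q,
    serre3 q, serre4 q⟩

end Stmt0
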